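/- Let p be a prime and f : A → B a surjective homomorphism of abelian groups whose kernel is finite. Then the induced homomorphism lim_p A → lim_p B is surjective; that is, for every sequence (b_n)_{n≥0} in B with p·b_{n+1} = b_n for all n, there exists a sequence (a_n)_{n≥0} in A with p·a_{n+1} = a_n and f(a_n) = b_n for all n. -/

import Mathlib

open CategoryTheory

/-- If `f : A → B` is a surjective homomorphism of abelian groups with finite kernel,
then the induced homomorphism `lim_p A → lim_p B` on the inverse limits of the
multiplication-by-`p` towers is surjective. -/
theorem plim_map_surjective_of_surjective_of_finite_ker
    (p : ℕ) (hp : p.Prime) {A B : Type*} [AddCommGroup A] [AddCommGroup B]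
    (f : A →+ B) (hf : Function.Surjective f) (hker : (f.ker : Set A).Finite) :
    ∀ b : ℕ → B, (∀ n, p • b (n + 1) = b n) →
      ∃ a : ℕ → A, (∀ n, p • a (n + 1) = a n) ∧ ∀ n, f (a n) = b n := by
  intro b hb
  have hfin : ∀ n : ℕ, Finite {a : A // f a = b n} := by
    intro n
    obtain ⟨a₀, ha₀⟩ := hf (b n)
    have : Finite f.ker := hker.to_subtype
    apply Finite.of_injective
      (fun x : {a : A // f a = b n} => (⟨x.1 - a₀, by simp [AddMonoidHom.mem_ker, x.2, ha₀]⟩ : f.ker))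
    intro x y h
    have := congrArg Subtype.val h
    exact Subtype.ext (by simpa [sub_left_inj] using this)
  have hne : ∀ n : ℕ, Nonempty {a : A // f a = b n} := fun n =>
    (hf (b n)).elim fun a ha => ⟨⟨a, ha⟩⟩
  let step : ∀ n : ℕ, {a : A // f a = b (n + 1)} → {a : A // f a = b n} :=
    fun n x => ⟨p • x.1, by rw [map_nsmul, x.2, hb]⟩
  let F : ℕᵒᵖ ⥤ Type _ := Functor.ofOpSequence (X := fun n => {a : A // f a = b n}) (fun n => TypeCat.ofHom (step n))
  have hFfin : ∀ j : ℕᵒᵖ, Finite (F.obj j) := fun j => hfin j.unop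
  have hFne : ∀ j : ℕᵒᵖ, Nonempty (F.obj j) := fun j => hne j.unop
  obtain ⟨s, hs⟩ := nonempty_sections_of_finite_inverse_system F
  refine ⟨fun n => (s ⟨n⟩).1, ?_, fun n => (s ⟨n⟩).2⟩
  intro n
  have h := hs (((homOfLE (Nat.le_add_right n 1)).op :
    Opposite.op (n + 1) ⟶ Opposite.op n))
  simp only [F, Functor.ofOpSequence_map_homOfLE_succ (C := Type _) (X := fun n => {a : A // f a = b n}) (f := fun n => TypeCat.ofHom (step n)) n, TypeCat.ofHom_apply] at h
  exact congrArg Subtype.val h
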